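/- Let v ∈ ℝⁿ and let A be the (n+1)×(n+1) real symmetric block matrix A = [[I, v], [vᵀ, 1]], where I is the n×n identity matrix. Then A is SPN if and only if ‖v₋‖ ≤ 1, where v₋ = max(−v, 0) is the entrywise negative part of v and ‖·‖ is the Euclidean norm. -/

import Mathlib

open Matrix

/-- A real symmetric matrix `A` is *copositive* if `xᵀAx ≥ 0` for every
entrywise nonnegative vector `x`. -/
def Copositive {ι : Type*} [Fintype ι] (A : Matrix ι ι ℝ) : Prop :=
  ∀ x : ι → ℝ, (∀ i, 0 ≤ x i) → 0 ≤ x ⬝ᵥ A.mulVec x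

/-- A real symmetric matrix is *SPN* if it is the sum of a positive semidefinite
matrix and a symmetric entrywise nonnegative matrix. -/
def IsSPN {ι : Type*} [Fintype ι] (A : Matrix ι ι ℝ) : Prop :=
  ∃ P N : Matrix ι ι ℝ, P.PosSemidef ∧ N.IsSymm ∧ (∀ i j, 0 ≤ N i j) ∧ A = P + N

lemma quadForm (n : ℕ) (w : Fin n → ℝ) (x : Fin n ⊕ Fin 1 → ℝ) :
    x ⬝ᵥ (Matrix.fromBlocks (1 : Matrix (Fin n) (Fin n) ℝ)
      (Matrix.replicateCol (Fin 1) w) (Matrix.replicateRow (Fin 1) w)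
      (1 : Matrix (Fin 1) (Fin 1) ℝ)).mulVec x =
    (∑ i, x (Sum.inl i)^2) + 2 * x (Sum.inr 0) * (∑ i, w i * x (Sum.inl i))
      + x (Sum.inr 0)^2 := by
  simp [dotProduct, mulVec, Fintype.sum_sum_type, fromBlocks, Fin.sum_univ_one,
    one_apply, Finset.mul_sum, Finset.sum_add_distrib, mul_comm, mul_assoc, sq]
  ring_nf
  rw [Finset.sum_add_distrib]
  simp only [mul_comm, mul_left_comm]
  ring_nf
  simp only [← Finset.sum_mul, sq]
  simp only [mul_assoc, ← Finset.mul_sum]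
  ring

/-- The bordered matrix `A = [[I, v], [vᵀ, 1]]` is SPN if and only if
`‖v₋‖ ≤ 1`, where `v₋` is the entrywise negative part of `v`. -/
theorem borderedIdentity_isSPN_iff_negPart_norm_le_one
    (n : ℕ) (v : Fin n → ℝ) :
    IsSPN (Matrix.fromBlocks (1 : Matrix (Fin n) (Fin n) ℝ)
      (Matrix.replicateCol (Fin 1) v) (Matrix.replicateRow (Fin 1) v)
      (1 : Matrix (Fin 1) (Fin 1) ℝ)) ↔
    Real.sqrt (∑ i, max (-(v i)) 0 ^ 2) ≤ 1 := by
  set w : Fin n → ℝ := fun i => max (-(v i)) 0 with hw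
  set u : Fin n → ℝ := fun i => max (v i) 0 with hu
  have hwnn : ∀ i, 0 ≤ w i := fun i => le_max_right _ _
  have hsnn : (0:ℝ) ≤ ∑ i, w i ^ 2 :=
    Finset.sum_nonneg fun i _ => sq_nonneg _
  have hvw : ∑ i, v i * w i = -∑ i, w i ^ 2 := by
    rw [← Finset.sum_neg_distrib]
    refine Finset.sum_congr rfl fun i _ => ?_
    rcases le_total (v i) 0 with h | h
    · have : w i = -(v i) := by simp [hw, max_eq_left (by linarith : (0:ℝ) ≤ -(v i))]
      rw [this]; ring
    · have : w i = 0 := by simp [hw, max_eq_right (by linarith : -(v i) ≤ (0:ℝ))]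
      rw [this]; ring
  constructor
  · rintro ⟨P, N, hP, hN, hNn, hA⟩
    -- copositivity at x = Sum.elim w (fun _ => sqrt s)
    set r : ℝ := Real.sqrt (∑ i, w i ^ 2) with hr
    have hrnn : 0 ≤ r := Real.sqrt_nonneg _
    have hr2 : r ^ 2 = ∑ i, w i ^ 2 := Real.sq_sqrt hsnn
    set x : Fin n ⊕ Fin 1 → ℝ := Sum.elim w (fun _ => r) with hx
    have hxnn : ∀ i, 0 ≤ x i := by rintro (i | i) <;> simp [hx, hwnn, hrnn]
    have hcop : 0 ≤ x ⬝ᵥ (Matrix.fromBlocks (1 : Matrix (Fin n) (Fin n) ℝ)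
        (Matrix.replicateCol (Fin 1) v) (Matrix.replicateRow (Fin 1) v)
        (1 : Matrix (Fin 1) (Fin 1) ℝ)).mulVec x := by
      rw [hA, add_mulVec, dotProduct_add]
      have h1 : 0 ≤ x ⬝ᵥ P.mulVec x := by
        have := hP.dotProduct_mulVec_nonneg x
        simpa using this
      have h2 : 0 ≤ x ⬝ᵥ N.mulVec x := by
        refine Finset.sum_nonneg fun i _ => mul_nonneg (hxnn i) ?_
        show 0 ≤ ∑ j, N i j * x j
        exact Finset.sum_nonneg fun j _ => mul_nonneg (hNn i j) (hxnn j)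
      linarith
    rw [quadForm] at hcop
    simp only [hx, Sum.elim_inl, Sum.elim_inr] at hcop
    rw [hvw] at hcop
    by_contra hc
    push_neg at hc
    have hr1 : (0:ℝ) < r ^ 2 := by nlinarith
    nlinarith
  · intro h
    have hsum : ∑ i, w i ^ 2 ≤ 1 := by
      nlinarith [Real.sq_sqrt hsnn, Real.sqrt_nonneg (∑ i, w i ^ 2)]
    refine ⟨Matrix.fromBlocks 1 (Matrix.replicateCol (Fin 1) (-w)) (Matrix.replicateRow (Fin 1) (-w)) 1,
      Matrix.fromBlocks 0 (Matrix.replicateCol (Fin 1) u) (Matrix.replicateRow (Fin 1) u) 0, ?_, ?_, ?_, ?_⟩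
    · rw [posSemidef_iff_dotProduct_mulVec]; constructor
      · ext (i | i) (j | j) <;>
          simp [Matrix.conjTranspose_apply, fromBlocks, one_apply, eq_comm]
      · intro x
        have hsx : star x = x := by ext i; simp
        rw [hsx, quadForm]
        have hcs : (∑ i, (-w) i * x (Sum.inl i)) ^ 2 ≤
            (∑ i, ((-w) i) ^ 2) * ∑ i, x (Sum.inl i) ^ 2 :=
          Finset.sum_mul_sq_le_sq_mul_sq _ _ _
        have hw2 : (∑ i, ((-w) i) ^ 2) = ∑ i, w i ^ 2 := by
          refine Finset.sum_congr rfl fun i _ => ?_; simp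
        rw [hw2] at hcs
        have hx2 : (0:ℝ) ≤ ∑ i, x (Sum.inl i) ^ 2 :=
          Finset.sum_nonneg fun i _ => sq_nonneg _
        nlinarith [sq_nonneg (x (Sum.inr 0) + ∑ i, (-w) i * x (Sum.inl i))]
    · ext (i | i) (j | j) <;> simp [Matrix.IsSymm, fromBlocks]
    · rintro (i | i) (j | j) <;>
        simp [fromBlocks, hwnn, le_max_right, hu]
    · have hdecomp : ∀ i, v i = -w i + u i := by
        intro i
        rcases le_total (v i) 0 with hvi | hvi
        · simp [hw, hu, max_eq_left (by linarith : (0:ℝ) ≤ -(v i)),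
            max_eq_right hvi]
        · simp [hw, hu, max_eq_right (by linarith : -(v i) ≤ (0:ℝ)),
            max_eq_left hvi]
      ext (i | i) (j | j)
      · simp [fromBlocks, one_apply]
      · simpa [fromBlocks] using hdecomp i
      · simpa [fromBlocks] using hdecomp j
      · simp [fromBlocks, one_apply]
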